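/- arXiv:2107.14702 — 2 statements merged into one kernel-verified Lean document; each statement's English description precedes it below -/
import Mathlib

section
/- Fix models M1, M2, M and let π = π^{M1}, ν = ν^{M2}_{π^{M1}}. Define the Bellman error at step h by L(M1,M2,M,h) := E_{(x_h,a_h,b_h) ∼ P^{M2}_{M1}}[ E_{(r,x') ∼ M}[r + Q_M(x', π, ν)] − E_{(r,x') ∼ M*}[r + Q_M(x', π, ν)] ], where M* is the true model. Then Q_M(x1, π, ν) − V_1^{π,ν}(x1) = Σ_{h=1}^H L(M1, M2, M, h). -/
/-- Simulation lemma for Markov games: with the policy pair (π,ν) fixed, a model is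
an (expected reward, transition kernel) pair over a finite state space; `QM` is the
Q-value under model M, `QStar` the true value function, `dist h` the state
distribution at step h induced by executing the policies in the true model, and
`L h` the Bellman error of M at step h; then
Q_M(x1,π,ν) − V₁^{π,ν}(x1) = Σ_{h=1}^H L(M1,M2,M,h). -/
theorem stmt_3 {S : Type*} [Fintype S] [DecidableEq S] (H : ℕ) (x1 : S)
    (rM rStar : ℕ → S → ℝ) (PM PStar : ℕ → S → S → ℝ)
    (hPM : ∀ h x, (∀ y, 0 ≤ PM h x y) ∧ ∑ y, PM h x y = 1)
    (hPStar : ∀ h x, (∀ y, 0 ≤ PStar h x y) ∧ ∑ y, PStar h x y = 1)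
    (QM QStar : ℕ → S → ℝ)
    (hQMend : ∀ x, QM (H + 1) x = 0) (hQSend : ∀ x, QStar (H + 1) x = 0)
    (hQM : ∀ h ∈ Finset.Icc 1 H, ∀ x,
      QM h x = rM h x + ∑ y, PM h x y * QM (h + 1) y)
    (hQS : ∀ h ∈ Finset.Icc 1 H, ∀ x,
      QStar h x = rStar h x + ∑ y, PStar h x y * QStar (h + 1) y)
    (dist : ℕ → S → ℝ)
    (hd1 : ∀ x, dist 1 x = if x = x1 then 1 else 0)
    (hdstep : ∀ h ∈ Finset.Icc 1 H, ∀ y,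
      dist (h + 1) y = ∑ x, dist h x * PStar h x y)
    (L : ℕ → ℝ)
    (hL : ∀ h ∈ Finset.Icc 1 H, L h = ∑ x, dist h x *
      ((rM h x + ∑ y, PM h x y * QM (h + 1) y) -
        (rStar h x + ∑ y, PStar h x y * QM (h + 1) y))) :
    QM 1 x1 - QStar 1 x1 = ∑ h ∈ Finset.Icc 1 H, L h := by
  set f : ℕ → ℝ := fun h => ∑ x, dist h x * (QM h x - QStar h x) with hf
  have key : ∀ h ∈ Finset.Icc 1 H, L h = f h - f (h+1) := by
    intro h hh
    have hfh1 : f (h+1) = ∑ x, dist h x * ∑ y, PStar h x y * (QM (h+1) y - QStar (h+1) y) := by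
      simp only [hf]
      have : ∀ y : S, dist (h+1) y * (QM (h+1) y - QStar (h+1) y)
          = ∑ x, dist h x * (PStar h x y * (QM (h+1) y - QStar (h+1) y)) := by
        intro y
        rw [hdstep h hh y, Finset.sum_mul]
        exact Finset.sum_congr rfl fun x _ => by ring
      rw [Finset.sum_congr rfl fun y _ => this y, Finset.sum_comm]
      exact Finset.sum_congr rfl fun x _ => (Finset.mul_sum _ _ _).symm
    rw [hL h hh, hfh1, hf, ← Finset.sum_sub_distrib]
    refine Finset.sum_congr rfl fun x _ => ?_
    rw [← mul_sub]
    congr 1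
    rw [hQM h hh x, hQS h hh x]
    have : ∑ y, PStar h x y * (QM (h+1) y - QStar (h+1) y)
        = (∑ y, PStar h x y * QM (h+1) y) - ∑ y, PStar h x y * QStar (h+1) y := by
      rw [← Finset.sum_sub_distrib]; exact Finset.sum_congr rfl fun y _ => by ring
    rw [this]; ring
  rw [Finset.sum_congr rfl key]
  have hIcc : Finset.Icc 1 H = Finset.image (· + 1) (Finset.range H) := by
    ext n
    simp only [Finset.mem_Icc, Finset.mem_image, Finset.mem_range]
    constructor
    · rintro ⟨h1, h2⟩; exact ⟨n - 1, by omega, by omega⟩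
    · rintro ⟨m, hm, rfl⟩; omega
  rw [hIcc, Finset.sum_image (by intros a _ b _ h; beta_reduce at h; omega)]
  have htel : ∑ i ∈ Finset.range H, (f (i+1) - f (i+1+1)) = f 1 - f (H+1) :=
    Finset.sum_range_sub' (fun i => f (i+1)) H
  rw [htel]
  have hfend : f (H+1) = 0 := by
    show (∑ x, dist (H+1) x * (QM (H+1) x - QStar (H+1) x)) = 0
    simp [hQMend, hQSend]
  have hf1 : f 1 = QM 1 x1 - QStar 1 x1 := by
    show (∑ x, dist 1 x * (QM 1 x - QStar 1 x)) = _
    rw [Finset.sum_congr rfl (fun x _ => by rw [hd1 x])]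
    simp
  rw [hfend, hf1]; ring
end

section
/- Let {φ_t}_{t≥1} be a sequence in ℝ^d with ‖φ_t‖₂ ≤ 1 for all t, let Λ_0 be positive definite with smallest eigenvalue at least 1, and Λ_t = Λ_0 + Σ_{i=1}^t φ_i φ_iᵀ. Then log(det Λ_t / det Λ_0) ≤ Σ_{i=1}^t φ_iᵀ Λ_{i-1}^{-1} φ_i ≤ 2 log(det Λ_t / det Λ_0). -/
open Matrix

private lemma quad_vecMulVec {d : ℕ} (v x : Fin d → ℝ) :
    x ⬝ᵥ (vecMulVec v v) *ᵥ x = (v ⬝ᵥ x) ^ 2 := by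
  simp only [dotProduct, mulVec, vecMulVec_apply, Finset.mul_sum, Finset.sum_mul, sq]
  rw [Finset.sum_comm]
  congr 1; ext j; congr 1; ext i; ring

private lemma det_lemma {d : ℕ} (v u : Fin d → ℝ) (A : Matrix (Fin d) (Fin d) ℝ)
    (hA : IsUnit A.det) :
    (A + vecMulVec u v).det = A.det * (1 + v ⬝ᵥ A⁻¹ *ᵥ u) := by
  rw [vecMulVec_eq Unit, det_add_replicateCol_mul_replicateRow hA]
  congr 1
  rw [det_unique]
  simp [mul_apply, replicateCol, replicateRow, dotProduct, mulVec, Finset.mul_sum, Finset.sum_mul]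
  rw [Finset.sum_comm]
  congr 1; ext j; congr 1; ext i; ring

private lemma quad_sum {d : ℕ} (φ : ℕ → Fin d → ℝ) (x : Fin d → ℝ) (s : Finset ℕ) :
    x ⬝ᵥ (∑ i ∈ s, vecMulVec (φ i) (φ i)) *ᵥ x = ∑ i ∈ s, (φ i ⬝ᵥ x) ^ 2 := by
  induction s using Finset.induction with
  | empty => simp
  | insert _ _ h ih =>
    rw [Finset.sum_insert h, add_mulVec, dotProduct_add, quad_vecMulVec, ih,
      Finset.sum_insert h]

/-- Elliptical Potential Lemma. -/
theorem stmt_6 {d : ℕ} (t : ℕ) (φ : ℕ → Fin d → ℝ)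
    (hφ : ∀ i, Real.sqrt (φ i ⬝ᵥ φ i) ≤ 1)
    (Λ₀ : Matrix (Fin d) (Fin d) ℝ) (hΛ₀ : Λ₀.PosDef)
    (heig : ∀ x : Fin d → ℝ, x ⬝ᵥ x ≤ x ⬝ᵥ Λ₀ *ᵥ x)
    (Λ : ℕ → Matrix (Fin d) (Fin d) ℝ)
    (hΛ : ∀ s, Λ s = Λ₀ + ∑ i ∈ Finset.Icc 1 s, vecMulVec (φ i) (φ i)) :
    Real.log ((Λ t).det / Λ₀.det) ≤
      ∑ i ∈ Finset.Icc 1 t, φ i ⬝ᵥ (Λ (i - 1))⁻¹ *ᵥ φ i ∧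
    ∑ i ∈ Finset.Icc 1 t, φ i ⬝ᵥ (Λ (i - 1))⁻¹ *ᵥ φ i ≤
      2 * Real.log ((Λ t).det / Λ₀.det) := by
  -- the quadratic form of Λ s dominates the identity
  have heig' : ∀ s (x : Fin d → ℝ), x ⬝ᵥ x ≤ x ⬝ᵥ Λ s *ᵥ x := by
    intro s x
    rw [hΛ s, add_mulVec, dotProduct_add, quad_sum]
    have h2 : (0:ℝ) ≤ ∑ i ∈ Finset.Icc 1 s, (φ i ⬝ᵥ x) ^ 2 :=
      Finset.sum_nonneg fun i _ => sq_nonneg _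
    linarith [heig x]
  -- Λ s is positive definite
  have hpos : ∀ s, (Λ s).PosDef := by
    intro s
    rw [hΛ s]
    refine hΛ₀.add_posSemidef (posSemidef_iff_dotProduct_mulVec.mpr ⟨?_, ?_⟩)
    · ext a b
      simp only [conjTranspose_apply, Matrix.sum_apply, vecMulVec_apply, star_trivial]
      exact Finset.sum_congr rfl fun i _ => mul_comm _ _
    · intro x
      simp only [star_trivial]
      rw [quad_sum]
      exact Finset.sum_nonneg fun i _ => sq_nonneg _
  have hdet0 : (0:ℝ) < Λ₀.det := hΛ₀.det_pos
  have hdetpos : ∀ s, (0:ℝ) < (Λ s).det := fun s => (hpos s).det_pos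
  -- abbreviation
  set u : ℕ → ℝ := fun i => φ i ⬝ᵥ (Λ (i - 1))⁻¹ *ᵥ φ i with hu
  -- u i ∈ [0, 1]
  have hu01 : ∀ i, 0 ≤ u i ∧ u i ≤ 1 := by
    intro i
    set M := Λ (i - 1) with hM
    set x := φ i with hx
    set y := M⁻¹ *ᵥ x with hy
    have hMy : M *ᵥ y = x := by
      rw [hy, mulVec_mulVec, mul_nonsing_inv _ (hdetpos (i-1)).ne'.isUnit, one_mulVec]
    have hui : u i = x ⬝ᵥ y := rfl
    have ha : x ⬝ᵥ y = y ⬝ᵥ M *ᵥ y := by rw [hMy, dotProduct_comm]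
    have hyy : y ⬝ᵥ y ≤ x ⬝ᵥ y := by rw [ha]; exact heig' _ y
    have hyy0 : 0 ≤ y ⬝ᵥ y := by
      simpa [dotProduct, sq] using Finset.sum_nonneg fun j (_ : j ∈ Finset.univ) =>
        mul_self_nonneg (y j)
    have h0 : 0 ≤ x ⬝ᵥ y := le_trans hyy0 hyy
    have hxx0 : 0 ≤ x ⬝ᵥ x := by
      simpa [dotProduct, sq] using Finset.sum_nonneg fun j (_ : j ∈ Finset.univ) =>
        mul_self_nonneg (x j)
    have hxx1 : x ⬝ᵥ x ≤ 1 := by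
      have := hφ i
      nlinarith [Real.sq_sqrt hxx0, Real.sqrt_nonneg (x ⬝ᵥ x)]
    have hcs : (x ⬝ᵥ y) ^ 2 ≤ (x ⬝ᵥ x) * (y ⬝ᵥ y) := by
      simpa [dotProduct, sq] using Finset.sum_mul_sq_le_sq_mul_sq Finset.univ x y
    constructor
    · rw [hui]; exact h0
    · rw [hui]; nlinarith
  -- telescoping determinant identity
  have hstep : ∀ k : ℕ, (Λ (k + 1)).det = (Λ k).det * (1 + u (k + 1)) := by
    intro k
    have hΛsucc : Λ (k + 1) = Λ k + vecMulVec (φ (k + 1)) (φ (k + 1)) := by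
      rw [hΛ (k + 1), hΛ k, Finset.sum_Icc_succ_top (Nat.one_le_iff_ne_zero.mpr (Nat.succ_ne_zero k)), add_assoc]
    rw [hΛsucc, det_lemma _ _ _ (hdetpos k).ne'.isUnit]
    rfl
  have key : ∀ s : ℕ, Real.log ((Λ s).det / Λ₀.det) =
      ∑ i ∈ Finset.Icc 1 s, Real.log (1 + u i) := by
    intro s
    induction s with
    | zero => simp [hΛ 0, div_self hdet0.ne']
    | succ k ih =>
      rw [Finset.sum_Icc_succ_top (Nat.one_le_iff_ne_zero.mpr (Nat.succ_ne_zero k)), ← ih,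
        hstep k]
      have h1u : (0:ℝ) < 1 + u (k + 1) := by linarith [(hu01 (k+1)).1]
      rw [show (Λ k).det * (1 + u (k+1)) / Λ₀.det = ((Λ k).det / Λ₀.det) * (1 + u (k+1)) by
        ring, Real.log_mul (div_pos (hdetpos k) hdet0).ne' h1u.ne']
  rw [key t]
  constructor
  · apply Finset.sum_le_sum
    intro i _
    have h1u : (0:ℝ) < 1 + u i := by linarith [(hu01 i).1]
    have := Real.log_le_sub_one_of_pos h1u
    linarith
  · rw [Finset.mul_sum]
    apply Finset.sum_le_sum
    intro i _
    obtain ⟨h0, h1⟩ := hu01 i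
    have h1u : (0:ℝ) < 1 + u i := by linarith
    have hlog := Real.one_sub_inv_le_log_of_pos h1u
    have hinv : (1 + u i) * (1 + u i)⁻¹ = 1 := mul_inv_cancel₀ h1u.ne'
    have hinv0 : (0:ℝ) ≤ (1 + u i)⁻¹ := inv_nonneg.mpr h1u.le
    nlinarith
end
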